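/- A subgraph H of the complete DAG K_{n+1} is a primitive face graph of CRY_n (i.e., H is the support of a flow with netflow (1, 0, ..., 0, -1) and V(H) = {1, ..., n+1}) if and only if every vertex i with 2 ≤ i ≤ n+1 has at least one incoming edge in H and every vertex i with 1 ≤ i ≤ n has at least one outgoing edge in H. -/

import Mathlib

open Finset

/-- Vertex set of a subgraph `H` of the complete DAG on `Fin (n+1)`, given by its edge set. -/
def verts (n : ℕ) (H : Finset (Fin (n + 1) × Fin (n + 1))) : Finset (Fin (n + 1)) :=
  H.image Prod.fst ∪ H.image Prod.snd

/-- The underlying undirected simple graph of the edge set `H`. -/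
def graphOf (n : ℕ) (H : Finset (Fin (n + 1) × Fin (n + 1))) : SimpleGraph (Fin (n + 1)) where
  Adj u v := u ≠ v ∧ ((u, v) ∈ H ∨ (v, u) ∈ H)
  symm := ⟨fun u v h => ⟨h.1.symm, h.2.symm⟩⟩
  loopless := ⟨fun v h => h.1 rfl⟩

/-- The number of connected components of `H`, i.e. of the undirected graph induced on the
vertex set of `H`. -/
noncomputable def numComponents (n : ℕ) (H : Finset (Fin (n + 1) × Fin (n + 1))) : ℕ :=
  Nat.card (SimpleGraph.induce (↑(verts n H) : Set (Fin (n + 1))) (graphOf n H)).ConnectedComponent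

/-- The first Betti number `|E(H)| - |V(H)| + c(H)` of the subgraph `H`. -/
noncomputable def betti (n : ℕ) (H : Finset (Fin (n + 1) × Fin (n + 1))) : ℕ :=
  H.card + numComponents n H - (verts n H).card

/-- `H` is a subgraph of the complete DAG `K_{n+1}` (edges `i → j` for `i < j` on
`Fin (n+1)`) that is the support of a nonnegative flow with netflow `(1, 0, …, 0, -1)`. -/
def IsCRYSupport (n : ℕ) (H : Finset (Fin (n + 1) × Fin (n + 1))) : Prop :=
  (∀ e ∈ H, e.1 < e.2) ∧
  ∃ f : Fin (n + 1) × Fin (n + 1) → ℝ,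
    (∀ e, 0 ≤ f e) ∧
    (∀ e, f e ≠ 0 ↔ e ∈ H) ∧
    ∀ v : Fin (n + 1),
      (∑ w, f (v, w)) - (∑ w, f (w, v)) =
        if v = 0 then 1 else if v = Fin.last n then -1 else 0

namespace Stmt11Aux

variable {n : ℕ}

def chi (e : Fin (n+1) × Fin (n+1)) : Fin (n+1) × Fin (n+1) → ℝ :=
  fun e' => if e' = e then 1 else 0

lemma chi_nonneg (e e' : Fin (n+1) × Fin (n+1)) : (0:ℝ) ≤ chi e e' := by
  unfold chi; split <;> norm_num

noncomputable def dvg (f : Fin (n+1) × Fin (n+1) → ℝ) (v : Fin (n+1)) : ℝ :=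
  (∑ w, f (v, w)) - (∑ w, f (w, v))

lemma dvg_zero (v : Fin (n+1)) : dvg 0 v = 0 := by simp [dvg]

lemma dvg_add (f g : Fin (n+1) × Fin (n+1) → ℝ) (v) :
    dvg (f + g) v = dvg f v + dvg g v := by
  simp [dvg, Finset.sum_add_distrib]; ring

lemma dvg_chi (e : Fin (n+1) × Fin (n+1)) (v) :
    dvg (chi e) v = (if v = e.1 then 1 else 0) - (if v = e.2 then 1 else 0) := by
  have h1 : (∑ w, chi e (v, w)) = if v = e.1 then 1 else 0 := by
    by_cases hv : v = e.1 <;> simp [chi, Prod.ext_iff, hv]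
  have h2 : (∑ w, chi e (w, v)) = if v = e.2 then 1 else 0 := by
    by_cases hv : v = e.2 <;> simp [chi, Prod.ext_iff, hv, and_comm]
  simp [dvg, h1, h2]

noncomputable def downAux (p : Fin (n+1) → Fin (n+1)) : ℕ → Fin (n+1) → Fin (n+1) × Fin (n+1) → ℝ
  | 0, _ => 0
  | (k+1), a => if a = 0 then 0 else downAux p k (p a) + chi (p a, a)

lemma downAux_nonneg (p : Fin (n+1) → Fin (n+1)) :
    ∀ k (a : Fin (n+1)) e, 0 ≤ downAux p k a e := by
  intro k
  induction k with
  | zero => intro a e; simp [downAux]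
  | succ k ih =>
    intro a e
    rw [downAux]
    split
    · simp
    · exact add_nonneg (ih (p a) e) (chi_nonneg _ e)

lemma downAux_support {H : Finset (Fin (n+1) × Fin (n+1))} (p : Fin (n+1) → Fin (n+1))
    (hp : ∀ v : Fin (n+1), v ≠ 0 → (p v, v) ∈ H) :
    ∀ k (a : Fin (n+1)) e, e ∉ H → downAux p k a e = 0 := by
  intro k
  induction k with
  | zero => intro a e _; simp [downAux]
  | succ k ih =>
    intro a e he
    rw [downAux]
    split
    · simp
    · next ha =>
      rw [Pi.add_apply, ih (p a) e he]
      have : e ≠ (p a, a) := fun h => he (h ▸ hp a ha)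
      simp [chi, this]

lemma dvg_downAux (p : Fin (n+1) → Fin (n+1))
    (hp : ∀ v : Fin (n+1), v ≠ 0 → (p v).val < v.val) :
    ∀ k (a : Fin (n+1)), a.val ≤ k → ∀ v,
      dvg (downAux p k a) v = (if v = 0 then 1 else 0) - (if v = a then 1 else 0) := by
  intro k
  induction k with
  | zero =>
    intro a ha v
    have : a = 0 := Fin.ext (Nat.le_zero.mp ha)
    subst this
    simp [downAux, dvg_zero]
  | succ k ih =>
    intro a ha v
    rw [downAux]
    by_cases h0 : a = 0
    · subst h0; simp [dvg_zero]
    · rw [if_neg h0, dvg_add, dvg_chi,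
        ih (p a) (by have := hp a h0; omega) v]
      ring

noncomputable def upAux (s : Fin (n+1) → Fin (n+1)) : ℕ → Fin (n+1) → Fin (n+1) × Fin (n+1) → ℝ
  | 0, _ => 0
  | (k+1), a => if a = Fin.last n then 0 else chi (a, s a) + upAux s k (s a)

lemma upAux_nonneg (s : Fin (n+1) → Fin (n+1)) :
    ∀ k (a : Fin (n+1)) e, 0 ≤ upAux s k a e := by
  intro k
  induction k with
  | zero => intro a e; simp [upAux]
  | succ k ih =>
    intro a e
    rw [upAux]
    split
    · simp
    · exact add_nonneg (chi_nonneg _ e) (ih (s a) e)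

lemma upAux_support {H : Finset (Fin (n+1) × Fin (n+1))} (s : Fin (n+1) → Fin (n+1))
    (hs : ∀ v : Fin (n+1), v ≠ Fin.last n → (v, s v) ∈ H) :
    ∀ k (a : Fin (n+1)) e, e ∉ H → upAux s k a e = 0 := by
  intro k
  induction k with
  | zero => intro a e _; simp [upAux]
  | succ k ih =>
    intro a e he
    rw [upAux]
    split
    · simp
    · next ha =>
      rw [Pi.add_apply, ih (s a) e he]
      have : e ≠ (a, s a) := fun h => he (h ▸ hs a ha)
      simp [chi, this]

lemma dvg_upAux (s : Fin (n+1) → Fin (n+1))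
    (hs : ∀ v : Fin (n+1), v ≠ Fin.last n → v.val < (s v).val) :
    ∀ k (a : Fin (n+1)), n - a.val ≤ k → ∀ v,
      dvg (upAux s k a) v = (if v = a then 1 else 0) - (if v = Fin.last n then 1 else 0) := by
  intro k
  induction k with
  | zero =>
    intro a ha v
    have hav : a.val ≤ n := Fin.is_le a
    have : a = Fin.last n := Fin.ext (by simp [Fin.last]; omega)
    subst this
    simp [upAux, dvg_zero]
  | succ k ih =>
    intro a ha v
    rw [upAux]
    by_cases h0 : a = Fin.last n
    · subst h0; simp [dvg_zero]
    · have hlt := hs a h0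
      have hsle : (s a).val ≤ n := Fin.is_le _
      rw [if_neg h0, dvg_add, dvg_chi,
        ih (s a) (by omega) v]
      ring

lemma dvg_const_mul (c : ℝ) (g : Fin (n+1) × Fin (n+1) → ℝ) (v) :
    dvg (fun e' => c * g e') v = c * dvg g v := by
  simp only [dvg]
  rw [← Finset.mul_sum, ← Finset.mul_sum]
  ring

lemma dvg_finset_sum {α : Type*} [DecidableEq α] (S : Finset α)
    (g : α → Fin (n+1) × Fin (n+1) → ℝ) (v) :
    dvg (fun e' => ∑ e ∈ S, g e e') v = ∑ e ∈ S, dvg (g e) v := by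
  induction S using Finset.induction_on with
  | empty => simp [dvg]
  | insert a s h ih =>
    simp only [Finset.sum_insert h]
    rw [show (fun e' => g a e' + ∑ e ∈ s, g e e') = (g a) + (fun e' => ∑ e ∈ s, g e e')
        from rfl, dvg_add, ih]

noncomputable def fe (p s : Fin (n+1) → Fin (n+1)) (e : Fin (n+1) × Fin (n+1)) :
    Fin (n+1) × Fin (n+1) → ℝ :=
  downAux p e.1.val e.1 + chi e + upAux s (n - e.2.val) e.2

lemma fe_nonneg (p s : Fin (n+1) → Fin (n+1)) (e e') : 0 ≤ fe p s e e' := by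
  simp only [fe, Pi.add_apply]
  have h1 := downAux_nonneg p e.1.val e.1 e'
  have h2 := chi_nonneg e e'
  have h3 := upAux_nonneg s (n - e.2.val) e.2 e'
  linarith

lemma fe_self (p s : Fin (n+1) → Fin (n+1)) (e) : 1 ≤ fe p s e e := by
  simp only [fe, Pi.add_apply]
  have h1 := downAux_nonneg p e.1.val e.1 e
  have h3 := upAux_nonneg s (n - e.2.val) e.2 e
  simp [chi]
  linarith

lemma fe_support {H : Finset (Fin (n+1) × Fin (n+1))} (p s : Fin (n+1) → Fin (n+1))
    (hp : ∀ v : Fin (n+1), v ≠ 0 → (p v, v) ∈ H)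
    (hs : ∀ v : Fin (n+1), v ≠ Fin.last n → (v, s v) ∈ H)
    (e : Fin (n+1) × Fin (n+1)) (he : e ∈ H) (e') (he' : e' ∉ H) :
    fe p s e e' = 0 := by
  simp only [fe, Pi.add_apply]
  rw [downAux_support p hp _ _ _ he', upAux_support s hs _ _ _ he']
  have : e' ≠ e := fun h => he' (h ▸ he)
  simp [chi, this]

lemma dvg_fe (p s : Fin (n+1) → Fin (n+1))
    (hp : ∀ v : Fin (n+1), v ≠ 0 → (p v).val < v.val)
    (hs : ∀ v : Fin (n+1), v ≠ Fin.last n → v.val < (s v).val)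
    (e : Fin (n+1) × Fin (n+1)) (v) :
    dvg (fe p s e) v = (if v = 0 then 1 else 0) - (if v = Fin.last n then 1 else 0) := by
  simp only [fe]
  rw [dvg_add, dvg_add, dvg_downAux p hp _ _ le_rfl, dvg_chi,
    dvg_upAux s hs _ _ le_rfl]
  ring

end Stmt11Aux

/-- A subgraph `H` of the complete DAG `K_{n+1}` is a primitive face graph of `CRY_n`
(the support of a flow with netflow `(1, 0, …, 0, -1)` using all vertices) if and only if
every vertex other than the first has at least one incoming edge in `H` and every vertex
other than the last has at least one outgoing edge in `H`. -/
theorem stmt11 (n : ℕ) (hn : 1 ≤ n) (H : Finset (Fin (n + 1) × Fin (n + 1)))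
    (hE : ∀ e ∈ H, e.1 < e.2) :
    (IsCRYSupport n H ∧ ∀ v : Fin (n + 1), ∃ e ∈ H, e.1 = v ∨ e.2 = v) ↔
      ((∀ v : Fin (n + 1), v ≠ 0 → ∃ u, (u, v) ∈ H) ∧
        (∀ v : Fin (n + 1), v ≠ Fin.last n → ∃ w, (v, w) ∈ H)) := by
  classical
  open Stmt11Aux in
  have hlast0 : (0 : Fin (n+1)) ≠ Fin.last n := by
    intro h
    have := congrArg Fin.val h
    simp [Fin.last] at this
    omega
  constructor
  · rintro ⟨⟨hE', f, hf0, hsupp, hdiv⟩, hall⟩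
    constructor
    · intro v hv
      by_contra hno
      push_neg at hno
      have hin : (∑ w, f (w, v)) = 0 :=
        Finset.sum_eq_zero fun w _ => by
          by_contra h; exact hno w ((hsupp (w, v)).mp h)
      have hout : (0:ℝ) ≤ ∑ w, f (v, w) := Finset.sum_nonneg fun w _ => hf0 _
      have hdv := hdiv v
      rw [hin, if_neg hv] at hdv
      by_cases hl : v = Fin.last n
      · rw [if_pos hl] at hdv; linarith
      · rw [if_neg hl] at hdv
        have hz : ∀ w ∈ (univ : Finset (Fin (n+1))), f (v, w) = 0 :=
          (Finset.sum_eq_zero_iff_of_nonneg fun w _ => hf0 _).mp (by linarith)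
        obtain ⟨⟨a, b⟩, heH, hev⟩ := hall v
        rcases hev with h1 | h2
        · have ha : a = v := h1
          subst ha
          exact (hsupp (a, b)).mpr heH (hz b (mem_univ _))
        · exact hno a (h2 ▸ heH)
    · intro v hv
      by_contra hno
      push_neg at hno
      have hout : (∑ w, f (v, w)) = 0 :=
        Finset.sum_eq_zero fun w _ => by
          by_contra h; exact hno w ((hsupp (v, w)).mp h)
      have hin : (0:ℝ) ≤ ∑ w, f (w, v) := Finset.sum_nonneg fun w _ => hf0 _
      have hdv := hdiv v
      rw [hout, if_neg hv] at hdv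
      by_cases h0 : v = 0
      · rw [if_pos h0] at hdv; linarith
      · rw [if_neg h0] at hdv
        have hz : ∀ w ∈ (univ : Finset (Fin (n+1))), f (w, v) = 0 :=
          (Finset.sum_eq_zero_iff_of_nonneg fun w _ => hf0 _).mp (by linarith)
        obtain ⟨⟨a, b⟩, heH, hev⟩ := hall v
        rcases hev with h1 | h2
        · exact hno b (h1 ▸ heH)
        · have hb : b = v := h2
          subst hb
          exact (hsupp (a, b)).mpr heH (hz a (mem_univ _))
  · rintro ⟨h1, h2⟩
    have h1' : ∀ v : Fin (n+1), ∃ u, v ≠ 0 → ((u, v) ∈ H ∧ u.val < v.val) := by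
      intro v
      by_cases hv : v = 0
      · exact ⟨0, fun h => absurd hv h⟩
      · obtain ⟨u, hu⟩ := h1 v hv
        exact ⟨u, fun _ => ⟨hu, hE _ hu⟩⟩
    have h2' : ∀ v : Fin (n+1), ∃ w, v ≠ Fin.last n → ((v, w) ∈ H ∧ v.val < w.val) := by
      intro v
      by_cases hv : v = Fin.last n
      · exact ⟨0, fun h => absurd hv h⟩
      · obtain ⟨w, hw⟩ := h2 v hv
        exact ⟨w, fun _ => ⟨hw, hE _ hw⟩⟩
    choose p hp using h1'
    choose s hs using h2'
    have hpH : ∀ v : Fin (n+1), v ≠ 0 → (p v, v) ∈ H := fun v hv => (hp v hv).1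
    have hpv : ∀ v : Fin (n+1), v ≠ 0 → (p v).val < v.val := fun v hv => (hp v hv).2
    have hsH : ∀ v : Fin (n+1), v ≠ Fin.last n → (v, s v) ∈ H := fun v hv => (hs v hv).1
    have hsv : ∀ v : Fin (n+1), v ≠ Fin.last n → v.val < (s v).val := fun v hv => (hs v hv).2
    obtain ⟨w0, hw0⟩ := h2 0 hlast0
    have hcard : (0:ℝ) < (H.card : ℝ) := by
      exact_mod_cast Finset.card_pos.mpr ⟨_, hw0⟩
    set c : ℝ := ((H.card : ℝ))⁻¹ with hc
    have hcpos : 0 < c := inv_pos.mpr hcard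
    refine ⟨⟨hE, fun e' => c * ∑ e ∈ H, fe p s e e', ?_, ?_, ?_⟩, ?_⟩
    · intro e'
      exact mul_nonneg hcpos.le (Finset.sum_nonneg fun e _ => fe_nonneg p s e e')
    · intro e'
      constructor
      · intro hne
        by_contra he'
        apply hne
        show c * ∑ e ∈ H, fe p s e e' = 0
        rw [Finset.sum_eq_zero fun e heH => fe_support p s hpH hsH e heH e' he', mul_zero]
      · intro he'
        have hsum : fe p s e' e' ≤ ∑ e ∈ H, fe p s e e' :=
          Finset.single_le_sum (fun e _ => fe_nonneg p s e e') he'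
        have h1le := fe_self p s e'
        have : 0 < c * ∑ e ∈ H, fe p s e e' := by
          apply mul_pos hcpos; linarith
        exact ne_of_gt this
    · intro v
      have key : dvg (fun e' => c * ∑ e ∈ H, fe p s e e') v
          = c * ∑ e ∈ H, dvg (fe p s e) v := by
        rw [dvg_const_mul, dvg_finset_sum]
      have key2 : ∑ e ∈ H, dvg (fe p s e) v
          = (H.card : ℝ) * ((if v = 0 then 1 else 0) - (if v = Fin.last n then 1 else 0)) := by
        rw [Finset.sum_congr rfl fun e _ => dvg_fe p s hpv hsv e v]
        rw [Finset.sum_const, nsmul_eq_mul]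
      have key3 : dvg (fun e' => c * ∑ e ∈ H, fe p s e e') v
          = (if v = 0 then 1 else 0) - (if v = Fin.last n then 1 else 0) := by
        rw [key, key2, ← mul_assoc, hc, inv_mul_cancel₀ (ne_of_gt hcard), one_mul]
      have goal : dvg (fun e' => c * ∑ e ∈ H, fe p s e e') v
          = if v = 0 then 1 else if v = Fin.last n then -1 else 0 := by
        rw [key3]
        by_cases hv0 : v = 0
        · subst hv0
          rw [if_pos rfl, if_pos rfl, if_neg hlast0]
          norm_num
        · rw [if_neg hv0, if_neg hv0]
          by_cases hvl : v = Fin.last n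
          · rw [if_pos hvl, if_pos hvl]; norm_num
          · rw [if_neg hvl, if_neg hvl]; norm_num
      exact goal
    · intro v
      by_cases hv : v = Fin.last n
      · subst hv
        obtain ⟨u, hu⟩ := h1 _ (Ne.symm hlast0)
        exact ⟨(u, Fin.last n), hu, Or.inr rfl⟩
      · obtain ⟨w, hw⟩ := h2 v hv
        exact ⟨(v, w), hw, Or.inl rfl⟩
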